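/- Let ρ(x) = -log f(x) where f is the ESBIII density with μ = 0, σ = 1. Then lim_{|x|→∞} ρ(x) = ∞ and lim_{|x|→∞} ρ(x)/|x| = 0. -/

import Mathlib

open Real Filter

/-- sign function with sign(0) = 1, as in the paper. -/
noncomputable def sgn (x : ℝ) : ℝ := if x < 0 then -1 else 1

/-- ESBIII density. -/
noncomputable def esbiiiPdf (c k ε : ℝ) (x : ℝ) : ℝ :=
  (c * k / 2) * ((sgn x * x) / (1 + sgn x * ε)) ^ (-(c + 1)) *
    (1 + ((sgn x * x) / (1 + sgn x * ε)) ^ (-c)) ^ (-(k + 1))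

/-- One-sided version of ρ: for `y > 0`, `rhoAux c k a y = -log f` with scale `a`. -/
noncomputable def rhoAux (c k a y : ℝ) : ℝ :=
  -Real.log ((c * k / 2) * (y / a) ^ (-(c + 1)) * (1 + (y / a) ^ (-c)) ^ (-(k + 1)))

lemma rhoAux_eq {c k a : ℝ} (hc : 0 < c) (hk : 0 < k) (ha : 0 < a) {y : ℝ} (hy : 0 < y) :
    rhoAux c k a y = -Real.log (c * k / 2) + (c + 1) * Real.log (y / a)
      + (k + 1) * Real.log (1 + (y / a) ^ (-c)) := by
  have hu : 0 < y / a := div_pos hy ha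
  have h1 : (0:ℝ) < (y / a) ^ (-(c + 1)) := Real.rpow_pos_of_pos hu _
  have h2 : (0:ℝ) < 1 + (y / a) ^ (-c) := by positivity
  have h3 : (0:ℝ) < (1 + (y / a) ^ (-c)) ^ (-(k + 1)) := Real.rpow_pos_of_pos h2 _
  unfold rhoAux
  rw [Real.log_mul (by positivity) h3.ne', Real.log_mul (by positivity) h1.ne',
      Real.log_rpow hu, Real.log_rpow h2]
  ring

lemma aux_log_tendsto {c a : ℝ} (hc : 0 < c) (ha : 0 < a) :
    Tendsto (fun y : ℝ => Real.log (1 + (y / a) ^ (-c))) atTop (nhds 0) := by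
  have h0 : Tendsto (fun y : ℝ => (y / a) ^ (-c)) atTop (nhds 0) :=
    (tendsto_rpow_neg_atTop hc).comp (tendsto_id.atTop_div_const ha)
  have h1 : Tendsto (fun y : ℝ => (1 : ℝ) + (y / a) ^ (-c)) atTop (nhds 1) := by
    simpa using tendsto_const_nhds.add h0
  have := ((Real.continuousAt_log (by norm_num : (1:ℝ) ≠ 0)).tendsto).comp h1
  simpa [Function.comp_def] using this

lemma rhoAux_tendsto_atTop {c k a : ℝ} (hc : 0 < c) (hk : 0 < k) (ha : 0 < a) :
    Tendsto (fun y => rhoAux c k a y) atTop atTop := by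
  have heq : ∀ᶠ y in atTop, (-Real.log (c * k / 2) + (c + 1) * Real.log (y / a)
      + (k + 1) * Real.log (1 + (y / a) ^ (-c))) = rhoAux c k a y :=
    (eventually_gt_atTop 0).mono fun y hy => (rhoAux_eq hc hk ha hy).symm
  refine Tendsto.congr' heq ?_
  have hlog : Tendsto (fun y : ℝ => Real.log (y / a)) atTop atTop :=
    Real.tendsto_log_atTop.comp (tendsto_id.atTop_div_const ha)
  have h2 : Tendsto (fun y : ℝ => (c + 1) * Real.log (y / a)) atTop atTop :=
    hlog.const_mul_atTop (by positivity)
  have h3 : Tendsto (fun y : ℝ => (k + 1) * Real.log (1 + (y / a) ^ (-c))) atTop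
      (nhds ((k + 1) * 0)) := tendsto_const_nhds.mul (aux_log_tendsto hc ha)
  exact (tendsto_const_nhds.add_atTop h2).atTop_add h3

lemma rhoAux_div_tendsto {c k a : ℝ} (hc : 0 < c) (hk : 0 < k) (ha : 0 < a) :
    Tendsto (fun y => rhoAux c k a y / y) atTop (nhds 0) := by
  have heq : ∀ᶠ y in atTop,
      ((-Real.log (c * k / 2) - (c + 1) * Real.log a) / y + (c + 1) * (Real.log y / y)
        + ((k + 1) * Real.log (1 + (y / a) ^ (-c))) / y) = rhoAux c k a y / y :=
    (eventually_gt_atTop 0).mono fun y hy => by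
      rw [rhoAux_eq hc hk ha hy, Real.log_div hy.ne' ha.ne']
      field_simp
      ring
  refine Tendsto.congr' heq ?_
  have h1 : Tendsto (fun y : ℝ => (-Real.log (c * k / 2) - (c + 1) * Real.log a) / y) atTop
      (nhds 0) := tendsto_const_nhds.div_atTop tendsto_id
  have h2 : Tendsto (fun y : ℝ => (c + 1) * (Real.log y / y)) atTop (nhds ((c + 1) * 0)) :=
    tendsto_const_nhds.mul Real.isLittleO_log_id_atTop.tendsto_div_nhds_zero
  have h3 : Tendsto (fun y : ℝ => ((k + 1) * Real.log (1 + (y / a) ^ (-c))) / y) atTop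
      (nhds 0) := (tendsto_const_nhds.mul (aux_log_tendsto hc ha)).div_atTop tendsto_id
  simpa using (h1.add h2).add h3

/-- ρ(x) = -log f(x) tends to ∞ as |x| → ∞, and ρ(x)/|x| tends to 0 as |x| → ∞. -/
theorem esbiii_rho_limits (c k ε : ℝ) (hc : 0 < c) (hk : 0 < k)
    (hε : ε ∈ Set.Ioo (-1 : ℝ) 1) :
    (Tendsto (fun x : ℝ => -Real.log (esbiiiPdf c k ε x)) atTop atTop ∧
      Tendsto (fun x : ℝ => -Real.log (esbiiiPdf c k ε x)) atBot atTop) ∧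
    (Tendsto (fun x : ℝ => -Real.log (esbiiiPdf c k ε x) / |x|) atTop (nhds 0) ∧
      Tendsto (fun x : ℝ => -Real.log (esbiiiPdf c k ε x) / |x|) atBot (nhds 0)) := by
  have haP : (0:ℝ) < 1 + ε := by linarith [hε.1]
  have haM : (0:ℝ) < 1 - ε := by linarith [hε.2]
  have keyP : ∀ x : ℝ, 0 < x → -Real.log (esbiiiPdf c k ε x) = rhoAux c k (1 + ε) x := by
    intro x hx; simp [esbiiiPdf, rhoAux, sgn, not_lt.mpr hx.le]
  have keyM : ∀ x : ℝ, x < 0 → -Real.log (esbiiiPdf c k ε x) = rhoAux c k (1 - ε) (-x) := by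
    intro x hx; simp [esbiiiPdf, rhoAux, sgn, hx, sub_eq_add_neg, neg_mul, one_mul, neg_div]
  refine ⟨⟨?_, ?_⟩, ?_, ?_⟩
  · exact Tendsto.congr' ((eventually_gt_atTop 0).mono fun x hx => (keyP x hx).symm)
      (rhoAux_tendsto_atTop hc hk haP)
  · exact Tendsto.congr' ((eventually_lt_atBot 0).mono fun x hx => (keyM x hx).symm)
      ((rhoAux_tendsto_atTop hc hk haM).comp tendsto_neg_atBot_atTop)
  · refine Tendsto.congr' ((eventually_gt_atTop 0).mono fun x hx => ?_)
      (rhoAux_div_tendsto hc hk haP)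
    simp only [abs_of_pos hx]
    rw [keyP x hx]
  · refine Tendsto.congr' ((eventually_lt_atBot 0).mono fun x hx => ?_)
      ((rhoAux_div_tendsto hc hk haM).comp tendsto_neg_atBot_atTop)
    show rhoAux c k (1 - ε) (-x) / (-x) = _
    simp only [abs_of_neg hx]
    rw [keyM x hx]
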